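/- Let (X, d_X, μ_X) be a complete separable metric space which is geometrically doubling (there is λ ∈ ℕ such that every ball B(x, r) can be covered by at most λ balls of radius r/2), equipped with a Borel regular measure μ_X finite on every ball, and let (Y, d_Y, μ_Y) be a separable metric space with a measure μ_Y. Suppose f : X → Y is a μ_X-measurable mapping satisfying the Luzin N-property: μ_Y(f(E)) = 0 (in outer measure) whenever E ⊆ X has μ_X(E) = 0. Then for every μ_X-measurable set A ⊆ X (not necessarily Borel), f can be redefined on a set of μ_X-measure zero so that the Banach indicatrix y ↦ N(y, f, A) is a μ_Y-measurable function. -/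

import Mathlib

open MeasureTheory

/-- A metric space is geometrically doubling if there is `n : ℕ` such that every ball
`B(x, r)` can be covered by at most `n` balls of radius `r / 2`. -/
def GeometricallyDoubling (X : Type*) [PseudoMetricSpace X] : Prop :=
  ∃ n : ℕ, ∀ (x : X) (r : ℝ), ∃ s : Finset X,
    s.card ≤ n ∧ Metric.ball x r ⊆ ⋃ c ∈ s, Metric.ball c (r / 2)

/-- A mapping `f : X → Y` is `μ`-measurable if the preimage of every open set is
measurable for the completion of `μ` (i.e. null measurable). -/
def MuMeasurableMap {X Y : Type*} [MeasurableSpace X] [TopologicalSpace Y]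
    (μ : Measure X) (f : X → Y) : Prop :=
  ∀ E : Set Y, IsOpen E → NullMeasurableSet (f ⁻¹' E) μ

/-- The Banach indicatrix (multiplicity function): the extended-natural-number
cardinality of `{x ∈ A | f x = y}`. -/
noncomputable def banachIndicatrix {X Y : Type*} (f : X → Y) (A : Set X) (y : Y) : ℕ∞ :=
  (A ∩ f ⁻¹' {y}).encard

section Aux
open Metric Set ENNReal NNReal

theorem GeometricallyDoubling.properSpace {X : Type*} [MetricSpace X] [CompleteSpace X]
    (h : GeometricallyDoubling X) : ProperSpace X := by
  obtain ⟨n, hn⟩ := h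
  have tb : ∀ (x : X) (r : ℝ), TotallyBounded (ball x r) := by
    intro x r
    have key : ∀ k : ℕ, ∃ t : Finset X, ball x r ⊆ ⋃ c ∈ t, ball c (r / 2 ^ k) := by
      intro k
      induction k with
      | zero => exact ⟨{x}, by simp⟩
      | succ k ih =>
        classical
        obtain ⟨t, ht⟩ := ih
        choose s hs hsub using fun c : X => hn c (r / 2 ^ k)
        refine ⟨t.biUnion s, ht.trans ?_⟩
        intro z hz
        simp only [Set.mem_iUnion, Finset.mem_biUnion] at hz ⊢
        obtain ⟨c, hc, hzc⟩ := hz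
        obtain ⟨d, hd, hzd⟩ := by simpa [Set.mem_iUnion] using hsub c hzc
        exact ⟨d, ⟨c, hc, hd⟩, by rwa [div_div, ← pow_succ] at hzd⟩
    rw [Metric.totallyBounded_iff]
    intro ε hε
    rcases le_or_gt r 0 with hr | hr
    · exact ⟨(∅ : Finset X), Finset.finite_toSet _, by simp [Metric.ball_eq_empty.2 hr]⟩
    · obtain ⟨k, hk⟩ : ∃ k : ℕ, r / ε < 2 ^ k := pow_unbounded_of_one_lt _ one_lt_two
      obtain ⟨t, ht⟩ := key k
      refine ⟨t, Finset.finite_toSet _, ht.trans ?_⟩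
      refine Set.iUnion₂_mono fun c _ => Metric.ball_subset_ball ?_
      rw [div_lt_iff₀ hε] at hk
      rw [div_le_iff₀ (by positivity)]
      nlinarith [pow_pos (zero_lt_two (α := ℝ)) k]
  constructor
  intro x r
  have : Metric.closedBall x r ⊆ ball x (r + 1) :=
    Metric.closedBall_subset_ball (by linarith)
  exact TotallyBounded.isCompact_of_isClosed ((tb x (r + 1)).subset this)
    Metric.isClosed_closedBall


section Partition
variable {X : Type*} [MetricSpace X] [TopologicalSpace.SeparableSpace X] [Nonempty X]

/-- radius at stage k -/
noncomputable def prad (k : ℕ) : ℝ := 1 / (2 * ((k : ℝ) + 1))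

lemma prad_pos (k : ℕ) : 0 < prad k := by unfold prad; positivity

/-- piece j of the stage-k partition -/
noncomputable def ppiece (k j : ℕ) : Set X :=
  ball (TopologicalSpace.denseSeq X j) (prad k) \
    ⋃ (i : ℕ) (_ : i < j), ball (TopologicalSpace.denseSeq X i) (prad k)

lemma ppiece_measurable [MeasurableSpace X] [BorelSpace X] (k j : ℕ) :
    MeasurableSet (ppiece (X := X) k j) :=
  (isOpen_ball.measurableSet).diff
    (MeasurableSet.iUnion fun i => MeasurableSet.iUnion fun _ => isOpen_ball.measurableSet)

lemma ppiece_disjoint {k j j' : ℕ} (h : j ≠ j') :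
    Disjoint (ppiece (X := X) k j) (ppiece (X := X) k j') := by
  wlog hlt : j < j' generalizing j j'
  · exact (this h.symm (by omega)).symm
  rw [Set.disjoint_left]
  rintro x ⟨hx1, -⟩ ⟨-, hx2⟩
  exact hx2 (Set.mem_iUnion₂.2 ⟨j, hlt, hx1⟩)

lemma ppiece_cover (k : ℕ) : ⋃ j, ppiece (X := X) k j = Set.univ := by
  refine Set.eq_univ_of_forall fun x => ?_
  have : ∃ j, x ∈ ball (TopologicalSpace.denseSeq X j) (prad k) := by
    obtain ⟨j, hj⟩ := (Metric.denseRange_iff.1 (TopologicalSpace.denseRange_denseSeq X)) x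
      (prad k) (prad_pos k)
    exact ⟨j, by simpa [mem_ball, dist_comm] using hj⟩
  classical
  refine Set.mem_iUnion.2 ⟨Nat.find this, Nat.find_spec this, ?_⟩
  rw [Set.mem_iUnion₂]
  rintro ⟨i, hi, hxi⟩
  exact Nat.find_min this hi hxi

lemma ppiece_dist {k j : ℕ} {x x' : X} (hx : x ∈ ppiece (X := X) k j)
    (hx' : x' ∈ ppiece (X := X) k j) : dist x x' < 1 / ((k : ℝ) + 1) := by
  have h1 : dist x (TopologicalSpace.denseSeq X j) < prad k := hx.1
  have h2 : dist x' (TopologicalSpace.denseSeq X j) < prad k := hx'.1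
  have := dist_triangle x (TopologicalSpace.denseSeq X j) x'
  rw [dist_comm (TopologicalSpace.denseSeq X j) x'] at this
  have hk : 0 < (k : ℝ) + 1 := by positivity
  calc dist x x' ≤ _ + _ := this
    _ < prad k + prad k := by linarith
    _ = 1 / ((k : ℝ) + 1) := by
        rw [prad, ← add_div, div_eq_div_iff (by positivity) hk.ne']; ring

end Partition


lemma exists_basis_enum (Y : Type*) [TopologicalSpace Y] [SecondCountableTopology Y] :
    ∃ V : ℕ → Set Y, (∀ n, IsOpen (V n)) ∧
      ∀ O : Set Y, IsOpen O → ∃ J : Set ℕ, O = ⋃ n ∈ J, V n := by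
  obtain ⟨b, hbc, -, hb⟩ := TopologicalSpace.exists_countable_basis Y
  have hne : (insert (∅ : Set Y) b).Nonempty := ⟨∅, Set.mem_insert _ _⟩
  obtain ⟨V, hV⟩ := Set.Countable.exists_eq_range (hbc.insert ∅) hne
  refine ⟨V, fun n => ?_, fun O hO => ?_⟩
  · have : V n ∈ insert (∅ : Set Y) b := hV ▸ Set.mem_range_self n
    rcases this with h | h
    · simp [h]
    · exact hb.isOpen h
  · refine ⟨{n | V n ⊆ O}, subset_antisymm (fun x hx => ?_) ?_⟩
    · obtain ⟨s, hs, hxs, hsO⟩ := hb.exists_subset_of_mem_open hx hO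
      have : s ∈ Set.range V := hV ▸ Set.mem_insert_of_mem _ hs
      obtain ⟨n, rfl⟩ := this
      exact Set.mem_biUnion hsO hxs
    · exact Set.iUnion₂_subset fun n hn => hn

lemma lusin_piece {X Y : Type*} [MetricSpace X] [MeasurableSpace X] [BorelSpace X]
    [MetricSpace Y] [SecondCountableTopology Y] [MeasurableSpace Y] [BorelSpace Y]
    (μ : Measure X) [Measure.Regular μ] {f : X → Y} (hf : Measurable f)
    {S : Set X} (hS : MeasurableSet S) (hfin : μ S ≠ ⊤) {ε : ℝ≥0∞} (hε : ε ≠ 0) :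
    ∃ K, K ⊆ S ∧ IsCompact K ∧ ContinuousOn f K ∧ μ (S \ K) < ε := by
  set ν : Measure X := μ.restrict S with hν
  haveI : IsFiniteMeasure ν := ⟨by
    rw [hν, Measure.restrict_apply_univ]; exact lt_top_iff_ne_top.2 hfin⟩
  haveI : ν.Regular := Measure.Regular.restrict_of_measure_ne_top hfin
  have hε2 : ε / 2 ≠ 0 := (ENNReal.half_pos hε).ne'
  have hε4 : ε / 2 / 2 ≠ 0 := (ENNReal.half_pos hε2).ne'
  obtain ⟨δ, δpos, hδsum⟩ := ENNReal.exists_pos_sum_of_countable hε4 ℕ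
  obtain ⟨V, hVopen, hVbasis⟩ := exists_basis_enum Y
  set P : ℕ → Set X := fun n => f ⁻¹' (V n) with hP
  have hPm : ∀ n, MeasurableSet (P n) := fun n => hf (hVopen n).measurableSet
  have hPfin : ∀ n, ν (P n) ≠ ⊤ := fun n => measure_ne_top ν _
  have hU : ∀ n, ∃ U, U ⊇ P n ∧ IsOpen U ∧ ν U < ⊤ ∧ ν (U \ P n) < δ n := fun n =>
    (hPm n).exists_isOpen_diff_lt (hPfin n) (by exact_mod_cast (δpos n).ne')
  have hC : ∀ n, ∃ C, C ⊆ P n ∧ IsClosed C ∧ ν (P n \ C) < δ n := fun n =>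
    (hPm n).exists_isClosed_diff_lt (hPfin n) (by exact_mod_cast (δpos n).ne')
  choose U hPU hUopen _ hUP using hU
  choose C hCP hCclosed hPC using hC
  set G : Set X := (⋃ n, U n \ C n)ᶜ with hG
  have hGclosed : IsClosed G := by
    rw [hG]; exact (isOpen_iUnion fun n => (hUopen n).sdiff (hCclosed n)).isClosed_compl
  have hUC : ∀ n, U n ∩ G = P n ∩ G := by
    intro n
    ext x
    refine ⟨fun ⟨hxU, hxG⟩ => ⟨?_, hxG⟩, fun ⟨hxP, hxG⟩ => ⟨hPU n hxP, hxG⟩⟩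
    have : x ∉ U n \ C n := fun h => hxG (Set.mem_iUnion.2 ⟨n, h⟩)
    exact hCP n (by simpa [hxU] using this)
  have hcont : ContinuousOn f G := by
    rw [_root_.continuousOn_iff']
    intro t ht
    obtain ⟨J, rfl⟩ := hVbasis t ht
    refine ⟨⋃ n ∈ J, U n, isOpen_biUnion fun n _ => hUopen n, ?_⟩
    rw [Set.preimage_iUnion₂]
    rw [Set.iUnion₂_inter, Set.iUnion₂_inter]
    exact Set.iUnion₂_congr fun n _ => (hUC n).symm
  have hGc : ν Gᶜ ≤ ε / 2 := by
    rw [hG, compl_compl]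
    calc ν (⋃ n, U n \ C n) ≤ ∑' n, ν (U n \ C n) := measure_iUnion_le _
      _ ≤ ∑' n, ((δ n : ℝ≥0∞) + δ n) := by
          refine ENNReal.tsum_le_tsum fun n => ?_
          have hsub : U n \ C n ⊆ (U n \ P n) ∪ (P n \ C n) := by
            intro x ⟨hxU, hxC⟩
            by_cases hxP : x ∈ P n
            · exact Or.inr ⟨hxP, hxC⟩
            · exact Or.inl ⟨hxU, hxP⟩
          exact (measure_mono hsub).trans <| (measure_union_le _ _).trans
            (add_le_add (hUP n).le (hPC n).le)
      _ = (∑' n, (δ n : ℝ≥0∞)) + ∑' n, (δ n : ℝ≥0∞) := ENNReal.tsum_add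
      _ ≤ ε / 2 / 2 + ε / 2 / 2 := add_le_add hδsum.le hδsum.le
      _ = ε / 2 := ENNReal.add_halves _
  obtain ⟨K, hKsub, hKcomp, hKlt⟩ :=
    (hS.inter hGclosed.measurableSet).exists_isCompact_diff_lt
      (measure_ne_top ν _) hε2 (μ := ν)
  refine ⟨K, hKsub.trans Set.inter_subset_left, hKcomp,
    hcont.mono (hKsub.trans Set.inter_subset_right), ?_⟩
  have hsplit : S \ K ⊆ Gᶜ ∪ ((S ∩ G) \ K) := by
    intro x ⟨hxS, hxK⟩
    by_cases hxG : x ∈ G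
    · exact Or.inr ⟨⟨hxS, hxG⟩, hxK⟩
    · exact Or.inl hxG
  have : μ (S \ K) = ν (S \ K) := by
    rw [hν, Measure.restrict_apply' hS]
    congr 1
    ext x; exact ⟨fun h => ⟨h, h.1⟩, fun h => h.1⟩
  rw [this]
  calc ν (S \ K) ≤ ν Gᶜ + ν ((S ∩ G) \ K) := le_trans (measure_mono hsplit) (measure_union_le _ _)
    _ < ε / 2 + ε / 2 := ENNReal.add_lt_add_of_le_of_lt (measure_ne_top ν _) hGc hKlt
    _ = ε := ENNReal.add_halves ε


lemma enat_eq_top_of_forall {a : ℕ∞} (h : ∀ n : ℕ, (n : ℕ∞) ≤ a) : a = ⊤ := by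
  cases a with
  | top => rfl
  | coe n => exact absurd (h (n + 1)) (by exact_mod_cast by omega)

lemma enat_eq_coe_iff (a : ℕ∞) (m : ℕ) :
    a = (m : ℕ∞) ↔ ((m : ℕ∞) ≤ a ∧ ¬(((m + 1 : ℕ) : ℕ∞) ≤ a)) := by
  cases a with
  | top => simp
  | coe n => constructor
             · rintro h; rw [Nat.cast_inj] at h; subst h
               exact ⟨le_refl _, by exact_mod_cast by omega⟩
             · rintro ⟨h1, h2⟩
               rw [Nat.cast_le] at h1
               have : ¬ (m + 1 ≤ n) := fun h => h2 (by exact_mod_cast h)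
               congr 1; omega

lemma meas_null_of_forall_lt {α : Type*} [MeasurableSpace α] {μ : Measure α} {s : Set α}
    (h : ∀ l : ℕ, μ s < ((l : ℝ≥0∞) + 1)⁻¹) : μ s = 0 := by
  by_contra h0
  obtain ⟨n, hn⟩ := ENNReal.exists_inv_nat_lt h0
  have h2 : ((n : ℝ≥0∞) + 1)⁻¹ ≤ (n : ℝ≥0∞)⁻¹ :=
    ENNReal.inv_le_inv' (le_add_of_nonneg_right zero_le_one)
  exact absurd ((h n).trans_le h2) (not_lt.2 hn.le)

lemma enat_inv_succ_ne_zero (l : ℕ) : ((l : ℝ≥0∞) + 1)⁻¹ ≠ 0 := by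
  simp [ENNReal.inv_ne_zero]

end Aux
section Main
open Metric Set ENNReal NNReal TopologicalSpace

/-- If a μX-measurable map `f` satisfies the Luzin N-property (images of
μX-null sets are μY-null in outer measure), then for every μX-measurable set `A` (not
necessarily Borel) `f` can be redefined on a μX-null set so that the Banach indicatrix
`y ↦ N(y, f, A)` is measurable with respect to the completion of `μY`. -/
theorem banachIndicatrix_nullMeasurable_of_luzinN
    {X Y : Type*}
    [MetricSpace X] [CompleteSpace X] [TopologicalSpace.SeparableSpace X]
    [MeasurableSpace X] [BorelSpace X]
    [MetricSpace Y] [TopologicalSpace.SeparableSpace Y]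
    [MeasurableSpace Y] [BorelSpace Y]
    (μX : Measure X) (μY : Measure Y)
    (hdoub : GeometricallyDoubling X)
    (hballs : ∀ (x : X) (r : ℝ), μX (Metric.ball x r) < ⊤)
    (f : X → Y) (hf : MuMeasurableMap μX f)
    (hLuzinN : ∀ E : Set X, μX E = 0 → μY (f '' E) = 0)
    (A : Set X) (hA : NullMeasurableSet A μX) :
    ∃ g : X → Y, g =ᵐ[μX] f ∧
      NullMeasurable (fun y => banachIndicatrix g A y) μY := by
  classical
  rcases isEmpty_or_nonempty X with hX | hX
  · refine ⟨f, Filter.EventuallyEq.rfl, ?_⟩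
    have hzero : (fun y => banachIndicatrix f A y) = fun _ => (0 : ℕ∞) := by
      funext y
      have : A ∩ f ⁻¹' {y} = ∅ := Set.eq_empty_of_isEmpty _
      simp [banachIndicatrix, this]
    rw [hzero]
    exact measurable_const.nullMeasurable
  set y₀ : Y := f (Classical.arbitrary X) with hy₀
  -- instances
  haveI : ProperSpace X := hdoub.properSpace
  haveI : SecondCountableTopology X := UniformSpace.secondCountable_of_separable X
  haveI : SecondCountableTopology Y := UniformSpace.secondCountable_of_separable Y
  haveI : IsLocallyFiniteMeasure μX :=
    ⟨fun x => ⟨Metric.ball x 1, Metric.ball_mem_nhds x one_pos, hballs x 1⟩⟩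
  -- measurable modification f₀ of f
  obtain ⟨V, hVopen, hVbasis⟩ := exists_basis_enum Y
  have hTex : ∀ n : ℕ, ∃ T, f ⁻¹' (V n) ⊆ T ∧ MeasurableSet T ∧ T =ᵐ[μX] f ⁻¹' (V n) :=
    fun n => (hf (V n) (hVopen n)).exists_measurable_superset_ae_eq
  choose T hTsub hTmeas hTae using hTex
  have hTnull : ∀ n, μX (T n \ f ⁻¹' (V n)) = 0 := by
    intro n
    have := (ae_eq_set.1 (hTae n)).1
    exact this
  set N₀ : Set X := toMeasurable μX (⋃ n, T n \ f ⁻¹' (V n)) with hN₀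
  have hN₀meas : MeasurableSet N₀ := measurableSet_toMeasurable _ _
  have hN₀null : μX N₀ = 0 := by
    rw [hN₀, measure_toMeasurable]
    exact measure_iUnion_null hTnull
  set f₀ : X → Y := fun x => if x ∈ N₀ then y₀ else f x with hf₀def
  have hf₀eq : ∀ x ∉ N₀, f₀ x = f x := fun x hx => if_neg hx
  have hpre₀ : ∀ n, f₀ ⁻¹' (V n) =
      ((T n \ N₀) ∪ (if y₀ ∈ V n then N₀ else ∅)) := by
    intro n
    ext x
    by_cases hx : x ∈ N₀
    · by_cases hy : y₀ ∈ V n <;>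
        simp [hf₀def, hx, hy]
    · have h1 : x ∈ T n → x ∈ f ⁻¹' (V n) := by
        intro hT
        by_contra hnot
        exact hx (subset_toMeasurable _ _ (Set.mem_iUnion.2 ⟨n, hT, hnot⟩))
      have h2 : x ∉ (if y₀ ∈ V n then N₀ else ∅ : Set X) := by
        split
        · exact hx
        · exact Set.notMem_empty x
      simp only [Set.mem_union, Set.mem_diff]
      constructor
      · intro h
        exact Or.inl ⟨hTsub n (by simpa [hf₀def, if_neg hx] using h), hx⟩
      · rintro (⟨hT, -⟩ | hN)
        · simpa [hf₀def, if_neg hx] using h1 hT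
        · exact absurd hN h2
  have hf₀ : Measurable f₀ := by
    apply measurable_of_isOpen
    intro O hO
    obtain ⟨J, rfl⟩ := hVbasis O hO
    rw [Set.preimage_iUnion₂]
    refine MeasurableSet.biUnion (Set.to_countable J) fun n _ => ?_
    rw [hpre₀ n]
    refine ((hTmeas n).diff hN₀meas).union ?_
    split <;> simp [hN₀meas]
  -- measurable hull B of A
  obtain ⟨B, hABsub, hBmeas, hBae⟩ := hA.exists_measurable_superset_ae_eq
  have hBAnull : μX (B \ A) = 0 := (ae_eq_set.1 hBae).1
  set Z : Set X := N₀ ∪ toMeasurable μX (B \ A) with hZ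
  have hZmeas : MeasurableSet Z := hN₀meas.union (measurableSet_toMeasurable _ _)
  have hZnull : μX Z = 0 :=
    measure_union_null hN₀null (by rw [measure_toMeasurable]; exact hBAnull)
  -- Lusin compacts
  have hKex : ∀ p : ℕ × ℕ, ∃ K, K ⊆ spanningSets μX p.1 ∧ IsCompact K ∧
      ContinuousOn f₀ K ∧ μX (spanningSets μX p.1 \ K) < ((p.2 : ℝ≥0∞) + 1)⁻¹ :=
    fun p => lusin_piece μX hf₀ (measurableSet_spanningSets μX p.1)
      (measure_spanningSets_lt_top μX p.1).ne (enat_inv_succ_ne_zero p.2)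
  choose K hKspan hKcomp hKcont hKsmall using hKex
  have hKfull : μX (⋃ p, K p)ᶜ = 0 := by
    have hm : ∀ m : ℕ, μX ((⋃ p, K p)ᶜ ∩ spanningSets μX m) = 0 := by
      intro m
      refine meas_null_of_forall_lt fun l => ?_
      refine lt_of_le_of_lt (measure_mono fun x hx => ?_) (hKsmall (m, l))
      exact ⟨hx.2, fun hK => hx.1 (Set.mem_iUnion.2 ⟨(m, l), hK⟩)⟩
    have : (⋃ p, K p)ᶜ = ⋃ m, ((⋃ p, K p)ᶜ ∩ spanningSets μX m) := by
      rw [← Set.inter_iUnion, iUnion_spanningSets, Set.inter_univ]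
    rw [this]
    exact measure_iUnion_null hm
  -- σ-compact refinements inside each piece
  set Tset : ℕ × ℕ → ℕ → ℕ → Set X :=
    fun p k j => K p ∩ B ∩ ppiece k j ∩ Zᶜ with hTset
  have hTsetMeas : ∀ p k j, MeasurableSet (Tset p k j) := fun p k j =>
    (((hKcomp p).isClosed.measurableSet.inter hBmeas).inter (ppiece_measurable k j)).inter
      hZmeas.compl
  have hTsetFin : ∀ p k j, μX (Tset p k j) ≠ ⊤ := fun p k j =>
    ((measure_mono fun x hx => hx.1.1.1).trans_lt (hKcomp p).measure_lt_top).ne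
  have hCCex : ∀ (p : ℕ × ℕ) (k j l : ℕ), ∃ C, C ⊆ Tset p k j ∧ IsCompact C ∧
      μX (Tset p k j \ C) < ((l : ℝ≥0∞) + 1)⁻¹ :=
    fun p k j l => (hTsetMeas p k j).exists_isCompact_diff_lt (hTsetFin p k j)
      (enat_inv_succ_ne_zero l)
  choose CC hCCsub hCCcomp hCCsmall using hCCex
  set FF : ℕ × ℕ → ℕ → ℕ → Set X := fun p k j => ⋃ l, CC p k j l with hFF
  have hFFsub : ∀ p k j, FF p k j ⊆ Tset p k j := fun p k j =>
    Set.iUnion_subset fun l => hCCsub p k j l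
  have hFFnull : ∀ p k j, μX (Tset p k j \ FF p k j) = 0 := by
    intro p k j
    refine meas_null_of_forall_lt fun l => ?_
    refine lt_of_le_of_lt (measure_mono fun x hx => ?_) (hCCsmall p k j l)
    exact ⟨hx.1, fun hC => hx.2 (Set.mem_iUnion.2 ⟨l, hC⟩)⟩
  -- the exceptional null set N
  set N : Set X := Z ∪ (⋃ p, K p)ᶜ ∪ ⋃ p, ⋃ k, ⋃ j, (Tset p k j \ FF p k j) with hN
  have hNmeas : MeasurableSet N := by
    refine (hZmeas.union ?_).union ?_
    · exact (MeasurableSet.iUnion fun p => (hKcomp p).isClosed.measurableSet).compl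
    · exact MeasurableSet.iUnion fun p => MeasurableSet.iUnion fun k =>
        MeasurableSet.iUnion fun j => (hTsetMeas p k j).diff
          (MeasurableSet.iUnion fun l => (hCCcomp p k j l).isClosed.measurableSet)
  have hNnull : μX N = 0 := by
    refine measure_union_null (measure_union_null hZnull hKfull) ?_
    exact measure_iUnion_null fun p => measure_iUnion_null fun k =>
      measure_iUnion_null fun j => hFFnull p k j
  have hZN : Z ⊆ N := fun x hx => Or.inl (Or.inl hx)
  have hN₀N : N₀ ⊆ N := fun x hx => hZN (Or.inl hx)
  -- the redefined map g
  set g : X → Y := fun x => if x ∈ N then y₀ else f x with hgdef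
  have hgf : g =ᵐ[μX] f := by
    rw [Filter.eventuallyEq_iff_exists_mem]
    exact ⟨Nᶜ, by rwa [mem_ae_iff, compl_compl], fun x hx => if_neg hx⟩
  have hgf₀ : ∀ x ∉ N, g x = f₀ x := by
    intro x hx
    rw [hgdef]
    simp only [if_neg hx]
    exact (hf₀eq x fun h => hx (hN₀N h)).symm
  set S : Set X := B ∩ Nᶜ with hS
  -- the partition identity
  have c3 : ∀ k j, S ∩ ppiece k j = (⋃ p, FF p k j) \ N := by
    intro k j
    ext x
    constructor
    · rintro ⟨⟨hxB, hxN⟩, hxE⟩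
      have hxK : ∃ p, x ∈ K p := by
        by_contra h
        exact hxN (Or.inl (Or.inr fun hmem => h (Set.mem_iUnion.1 hmem)))
      obtain ⟨p, hxK⟩ := hxK
      have hxZ : x ∉ Z := fun h => hxN (hZN h)
      have hxT : x ∈ Tset p k j := ⟨⟨⟨hxK, hxB⟩, hxE⟩, hxZ⟩
      have hxF : x ∈ FF p k j := by
        by_contra h
        exact hxN (Or.inr (Set.mem_iUnion.2 ⟨p, Set.mem_iUnion.2 ⟨k,
          Set.mem_iUnion.2 ⟨j, hxT, h⟩⟩⟩))
      exact ⟨Set.mem_iUnion.2 ⟨p, hxF⟩, hxN⟩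
    · rintro ⟨hxF, hxN⟩
      obtain ⟨p, hxF⟩ := Set.mem_iUnion.1 hxF
      have hxT : x ∈ Tset p k j := hFFsub p k j hxF
      exact ⟨⟨hxT.1.1.2, hxN⟩, hxT.1.2⟩
  -- images of the pieces
  set Qset : ℕ → ℕ → Set Y := fun k j => f₀ '' (S ∩ ppiece k j) with hQset
  have c4 : ∀ k j, NullMeasurableSet (Qset k j) μY := by
    intro k j
    set Gs : Set Y := ⋃ p, ⋃ l, f₀ '' (CC p k j l) with hGs
    have hGsMeas : MeasurableSet Gs := by
      refine MeasurableSet.iUnion fun p => MeasurableSet.iUnion fun l => ?_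
      have hsub : CC p k j l ⊆ K p := fun x hx => (hCCsub p k j l hx).1.1.1
      exact (((hCCcomp p k j l).image_of_continuousOn
        ((hKcont p).mono hsub)).isClosed).measurableSet
    have hQG : Qset k j ⊆ Gs := by
      rintro y ⟨x, hx, rfl⟩
      rw [c3 k j] at hx
      obtain ⟨p, hxF⟩ := Set.mem_iUnion.1 hx.1
      obtain ⟨l, hxC⟩ := Set.mem_iUnion.1 hxF
      exact Set.mem_iUnion.2 ⟨p, Set.mem_iUnion.2 ⟨l, ⟨x, hxC, rfl⟩⟩⟩
    have hGQnull : μY (Gs \ Qset k j) = 0 := by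
      refine measure_mono_null (fun y hy => ?_) (hLuzinN N hNnull)
      obtain ⟨hyG, hyQ⟩ := hy
      obtain ⟨p, hyG⟩ := Set.mem_iUnion.1 hyG
      obtain ⟨l, hyG⟩ := Set.mem_iUnion.1 hyG
      obtain ⟨x, hxC, rfl⟩ := hyG
      have hxN : x ∈ N := by
        by_contra hxN
        refine hyQ ⟨x, ?_, rfl⟩
        rw [c3 k j]
        exact ⟨Set.mem_iUnion.2 ⟨p, Set.mem_iUnion.2 ⟨l, hxC⟩⟩, hxN⟩
      have hxZ : x ∉ Z := (hCCsub p k j l hxC).2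
      have : f₀ x = f x := hf₀eq x fun h => hxZ (Or.inl h)
      exact ⟨x, hxN, this.symm⟩
    have hQeq : Qset k j = Gs \ (Gs \ Qset k j) := (Set.diff_diff_cancel_left hQG).symm
    rw [hQeq]
    exact hGsMeas.nullMeasurableSet.diff (NullMeasurableSet.of_null hGQnull)
  -- the index function
  set hIdx : Y → ℕ∞ := fun y => ⨆ p : ℕ × Finset ℕ,
    if (∀ j ∈ p.2, y ∈ Qset p.1 j) then (p.2.card : ℕ∞) else 0 with hIdxdef
  have L2 : ∀ (y : Y) (k : ℕ) (s : Finset ℕ), (∀ j ∈ s, y ∈ Qset k j) →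
      (s.card : ℕ∞) ≤ (S ∩ f₀ ⁻¹' {y}).encard := by
    intro y k s hs
    have hw : ∀ j ∈ s, ∃ x, (x ∈ S ∩ ppiece k j) ∧ f₀ x = y := fun j hj => hs j hj
    choose! w hw1 hw2 using hw
    have hinj : Set.InjOn w ↑s := by
      intro j hj j' hj' he
      by_contra hne
      exact (Set.disjoint_left.1 (ppiece_disjoint (X := X) (k := k) hne)
        (hw1 j hj).2) (he ▸ (hw1 j' hj').2)
    calc (s.card : ℕ∞) = (↑s : Set ℕ).encard := (Set.encard_coe_eq_coe_finsetCard s).symm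
      _ = (w '' ↑s).encard := hinj.encard_image.symm
      _ ≤ (S ∩ f₀ ⁻¹' {y}).encard := by
          refine Set.encard_le_encard ?_
          rintro _ ⟨j, hj, rfl⟩
          exact ⟨(hw1 j hj).1, by simp [hw2 j hj]⟩
  have L1 : ∀ (y : Y) (W : Finset X), ↑W ⊆ S ∩ f₀ ⁻¹' {y} →
      (W.card : ℕ∞) ≤ hIdx y := by
    intro y W hW
    have hkex : ∃ k : ℕ, ∀ x ∈ W, ∀ x' ∈ W, x ≠ x' → 1 / ((k : ℝ) + 1) < dist x x' := by
      by_cases hOD : W.offDiag.Nonempty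
      · set δ := W.offDiag.inf' hOD (fun q => dist q.1 q.2) with hδdef
        have hδ : 0 < δ := by
          rw [hδdef, Finset.lt_inf'_iff]
          rintro ⟨a, b⟩ hq
          rw [Finset.mem_offDiag] at hq
          exact dist_pos.2 hq.2.2
        obtain ⟨n, hn⟩ := exists_nat_one_div_lt hδ
        refine ⟨n, fun x hx x' hx' hne => lt_of_lt_of_le hn ?_⟩
        exact Finset.inf'_le (fun q => dist q.1 q.2)
          (Finset.mem_offDiag.2 ⟨hx, hx', hne⟩) (b := (x, x'))
      · exact ⟨0, fun x hx x' hx' hne =>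
          absurd ⟨(x, x'), Finset.mem_offDiag.2 ⟨hx, hx', hne⟩⟩ hOD⟩
    obtain ⟨k, hk⟩ := hkex
    set jf : X → ℕ := fun x => if h : ∃ j, x ∈ ppiece (X := X) k j then h.choose else 0
      with hjfdef
    have hjf : ∀ x : X, x ∈ ppiece k (jf x) := by
      intro x
      have hex : ∃ j, x ∈ ppiece (X := X) k j := by
        have := ppiece_cover (X := X) k
        rw [Set.eq_univ_iff_forall] at this
        exact Set.mem_iUnion.1 (this x)
      rw [hjfdef]
      simp only [dif_pos hex]
      exact hex.choose_spec
    have hinj : Set.InjOn jf ↑W := by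
      intro x hx x' hx' he
      by_contra hne
      have h1 := hjf x
      rw [he] at h1
      exact absurd (ppiece_dist h1 (hjf x')) (not_lt.2 (hk x hx x' hx' hne).le)
    have hcond : ∀ j ∈ W.image jf, y ∈ Qset k j := by
      intro j hj
      rw [Finset.mem_image] at hj
      obtain ⟨x, hx, rfl⟩ := hj
      exact ⟨x, ⟨(hW hx).1, hjf x⟩, by simpa using (hW hx).2⟩
    calc (W.card : ℕ∞) = ((W.image jf).card : ℕ∞) := by
          rw [Finset.card_image_of_injOn hinj]
      _ ≤ hIdx y := by
          rw [hIdxdef]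
          refine le_trans (le_of_eq ?_) (le_iSup _ (k, W.image jf))
          rw [if_pos hcond]
  have c5 : ∀ y, (S ∩ f₀ ⁻¹' {y}).encard = hIdx y := by
    intro y
    refine le_antisymm ?_ (iSup_le fun p => ?_)
    · rcases (S ∩ f₀ ⁻¹' {y}).finite_or_infinite with hfin | hinf
      · rw [Set.Finite.encard_eq_coe_toFinset_card hfin]
        exact L1 y hfin.toFinset (by simp)
      · rw [hinf.encard_eq]
        rw [enat_eq_top_of_forall (a := hIdx y) fun n => ?_]
        obtain ⟨W, hWsub, hWcard⟩ := hinf.exists_subset_card_eq n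
        simpa [hWcard] using L1 y W hWsub
    · split
      · exact L2 y p.1 p.2 ‹_›
      · exact zero_le
  -- the counting identity for g
  set cst : ℕ∞ := (A ∩ N).encard with hcst
  have hsplit : ∀ y, A ∩ g ⁻¹' {y} =
      (S ∩ f₀ ⁻¹' {y}) ∪ (if y = y₀ then A ∩ N else ∅) := by
    intro y
    ext x
    by_cases hx : x ∈ N
    · have hgx : g x = y₀ := if_pos hx
      constructor
      · rintro ⟨hxA, hxy⟩
        have hyy : y = y₀ := by
          rw [← hgx]
          exact (Set.mem_preimage.1 hxy).symm
        rw [if_pos hyy]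
        exact Or.inr ⟨hxA, hx⟩
      · rintro (⟨⟨hxB, hxN⟩, -⟩ | h)
        · exact absurd hx hxN
        · split at h
          · next hyy => exact ⟨h.1, Set.mem_preimage.2 (by rw [hgx, hyy]; exact rfl)⟩
          · exact absurd h (Set.notMem_empty x)
    · have hgx : g x = f₀ x := hgf₀ x hx
      constructor
      · rintro ⟨hxA, hxy⟩
        refine Or.inl ⟨⟨hABsub hxA, hx⟩, Set.mem_preimage.2 ?_⟩
        rw [← hgx]
        exact Set.mem_preimage.1 hxy
      · rintro (⟨⟨hxB, hxN⟩, hxf⟩ | h)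
        · have hxA : x ∈ A := by
            by_contra hnA
            exact hx (hZN (Or.inr (subset_toMeasurable _ _ ⟨hxB, hnA⟩)))
          refine ⟨hxA, Set.mem_preimage.2 ?_⟩
          rw [hgx]
          exact Set.mem_preimage.1 hxf
        · split at h
          · exact absurd h.2 hx
          · exact absurd h (Set.notMem_empty x)
  have hdisj : ∀ y, Disjoint (S ∩ f₀ ⁻¹' {y}) (if y = y₀ then A ∩ N else ∅) := by
    intro y
    split
    · exact Set.disjoint_left.2 fun x hx1 hx2 => hx1.1.2 hx2.2
    · exact disjoint_bot_right
  have key : ∀ y, banachIndicatrix g A y = hIdx y + (if y = y₀ then cst else 0) := by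
    intro y
    rw [banachIndicatrix, hsplit y, Set.encard_union_eq (hdisj y), c5 y]
    congr 1
    split <;> simp [hcst]
  refine ⟨g, hgf, ?_⟩
  -- null measurability of the level sets of hIdx
  have hge : ∀ n : ℕ, NullMeasurableSet {y | (n : ℕ∞) ≤ hIdx y} μY := by
    intro n
    rcases Nat.eq_zero_or_pos n with rfl | hn
    · have huniv : {y : Y | ((0 : ℕ) : ℕ∞) ≤ hIdx y} = Set.univ := by
        ext y; simp
      rw [huniv]
      exact MeasurableSet.univ.nullMeasurableSet
    · have heq : {y | (n : ℕ∞) ≤ hIdx y} =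
          ⋃ (p : ℕ × Finset ℕ), ⋃ (_ : n ≤ p.2.card), ⋂ j ∈ p.2, Qset p.1 j := by
        ext y
        simp only [Set.mem_setOf_eq, Set.mem_iUnion, Set.mem_iInter]
        constructor
        · intro hy
          by_contra hno
          push_neg at hno
          have hb : ∀ p : ℕ × Finset ℕ,
              (if (∀ j ∈ p.2, y ∈ Qset p.1 j) then (p.2.card : ℕ∞) else 0) ≤
                ((n - 1 : ℕ) : ℕ∞) := by
            intro p
            split
            · next h =>
                have hcard : ¬ n ≤ p.2.card := by
                  intro hc
                  obtain ⟨j, hj, hnq⟩ := hno p hc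
                  exact hnq (h j hj)
                exact_mod_cast (by omega : p.2.card ≤ n - 1)
            · exact zero_le
          have hle : hIdx y ≤ ((n - 1 : ℕ) : ℕ∞) := by
            rw [hIdxdef]
            exact iSup_le hb
          have hlt : ((n - 1 : ℕ) : ℕ∞) < (n : ℕ∞) := by
            exact_mod_cast (by omega : n - 1 < n)
          exact absurd (hy.trans hle) (not_le.2 hlt)
        · rintro ⟨p, hcard, hall⟩
          calc (n : ℕ∞) ≤ (p.2.card : ℕ∞) := by exact_mod_cast hcard
            _ ≤ hIdx y := by
                have h2 := le_iSup (fun q : ℕ × Finset ℕ =>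
                  if (∀ j ∈ q.2, y ∈ Qset q.1 j) then (q.2.card : ℕ∞) else 0) p
                rw [if_pos hall] at h2
                exact h2
      rw [heq]
      refine NullMeasurableSet.iUnion fun p => NullMeasurableSet.iUnion fun _ => ?_
      exact Finset.nullMeasurableSet_biInter p.2 fun j _ => c4 p.1 j
  have hIdxfib : ∀ v : ℕ∞, NullMeasurableSet {y | hIdx y = v} μY := by
    intro v
    cases v with
    | top =>
      have htop : {y | hIdx y = ⊤} = ⋂ n : ℕ, {y | (n : ℕ∞) ≤ hIdx y} := by
        ext y
        simp only [Set.mem_setOf_eq, Set.mem_iInter]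
        exact ⟨fun h n => h ▸ le_top, fun h => enat_eq_top_of_forall h⟩
      rw [htop]
      exact NullMeasurableSet.iInter fun n => hge n
    | coe m =>
      have hco : {y | hIdx y = (m : ℕ∞)} =
          {y | (m : ℕ∞) ≤ hIdx y} \ {y | (((m + 1 : ℕ)) : ℕ∞) ≤ hIdx y} := by
        ext y
        simp only [Set.mem_setOf_eq, Set.mem_diff]
        exact enat_eq_coe_iff _ m
      rw [hco]
      exact (hge m).diff (hge (m + 1))
  have hfib : ∀ v : ℕ∞, NullMeasurableSet {y | banachIndicatrix g A y = v} μY := by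
    intro v
    by_cases hc : hIdx y₀ + cst = v
    · have hv : {y | banachIndicatrix g A y = v} = ({y | hIdx y = v} \ {y₀}) ∪ {y₀} := by
        ext y
        by_cases hy : y = y₀
        · subst hy; simp [key, hc]
        · simp [key, hy]
      rw [hv]
      exact ((hIdxfib v).diff (measurableSet_singleton y₀).nullMeasurableSet).union
        (measurableSet_singleton y₀).nullMeasurableSet
    · have hv : {y | banachIndicatrix g A y = v} = {y | hIdx y = v} \ {y₀} := by
        ext y
        by_cases hy : y = y₀
        · subst hy; simp [key, hc]
        · simp [key, hy]
      rw [hv]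
      exact (hIdxfib v).diff (measurableSet_singleton y₀).nullMeasurableSet
  intro s _
  have hpre : (fun y => banachIndicatrix g A y) ⁻¹' s =
      ⋃ v ∈ s, {y | banachIndicatrix g A y = v} := by
    ext y
    simp only [Set.mem_preimage, Set.mem_iUnion, Set.mem_setOf_eq]
    exact ⟨fun h => ⟨_, h, rfl⟩, fun ⟨v, hv, he⟩ => he ▸ hv⟩
  rw [hpre]
  exact NullMeasurableSet.biUnion (Set.to_countable s) fun v _ => hfib v

end Main
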